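/- Let α ∈ ℂ with Re(α) > 0 and let f : ℝ → ℂ be Z-almost automorphic. Then x₂(t) = −∫_{t}^{+∞} e^{α(t−s)} f(s) ds is well defined and is the unique almost automorphic solution of the scalar equation x'(t) = α x(t) + f(t), i.e. the unique almost automorphic function x satisfying x(t) = x(s) + ∫_s^t (α x(u) + f(u)) du for all s ≤ t. -/

import Mathlib

open MeasureTheory Filter Topology

/-- Bounded, piecewise continuous scalar function: continuous on ℝ ∖ ℤ with finite
one-sided limits at every integer. -/
def BddPCc (f : ℝ → ℂ) : Prop :=
  (∃ C : ℝ, ∀ t : ℝ, ‖f t‖ ≤ C) ∧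
  ContinuousOn f {t : ℝ | ∀ n : ℤ, t ≠ (n : ℝ)} ∧
  ∀ n : ℤ, (∃ L : ℂ, Tendsto f (𝓝[<] (n : ℝ)) (𝓝 L)) ∧
           (∃ R : ℂ, Tendsto f (𝓝[>] (n : ℝ)) (𝓝 R))

/-- `ℤ`-almost automorphic scalar functions. -/
def ZAlmostAutomorphicC (f : ℝ → ℂ) : Prop :=
  BddPCc f ∧
  ∀ s : ℕ → ℤ, ∃ (φ : ℕ → ℕ) (g : ℝ → ℂ), StrictMono φ ∧
    (∀ t : ℝ, Tendsto (fun n => f (t + (s (φ n) : ℝ))) atTop (𝓝 (g t))) ∧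
    (∀ t : ℝ, Tendsto (fun n => g (t - (s (φ n) : ℝ))) atTop (𝓝 (f t)))

/-- Almost automorphic scalar functions in the sense of Bochner. -/
def AlmostAutomorphicC (f : ℝ → ℂ) : Prop :=
  (∃ C : ℝ, ∀ t : ℝ, ‖f t‖ ≤ C) ∧ Continuous f ∧
  ∀ s : ℕ → ℝ, ∃ (φ : ℕ → ℕ) (g : ℝ → ℂ), StrictMono φ ∧
    (∀ t : ℝ, Tendsto (fun n => f (t + s (φ n))) atTop (𝓝 (g t))) ∧
    (∀ t : ℝ, Tendsto (fun n => g (t - s (φ n))) atTop (𝓝 (f t)))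

namespace UAA

noncomputable def conv (α : ℂ) (f : ℝ → ℂ) (t : ℝ) : ℂ :=
  -∫ s in Set.Ioi t, Complex.exp (α * (t - s)) * f s

lemma kernel_norm (α : ℂ) (t s : ℝ) (z : ℂ) :
    ‖Complex.exp (α * (t - s)) * z‖ = Real.exp (α.re * (t - s)) * ‖z‖ := by
  rw [norm_mul, Complex.norm_exp]
  congr 2
  simp [Complex.mul_re]

lemma kernel_cont (α : ℂ) (t : ℝ) :
    Continuous fun s : ℝ => Complex.exp (α * (t - s)) := by
  fun_prop

variable {α : ℂ} {g : ℝ → ℂ} {C : ℝ}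

lemma integrableOn_kernel (hα : 0 < α.re) (hm : AEStronglyMeasurable g volume)
    (hb : ∀ t, ‖g t‖ ≤ C) (t : ℝ) :
    IntegrableOn (fun s : ℝ => Complex.exp (α * (t - s)) * g s) (Set.Ioi t) := by
  have hC : 0 ≤ C := le_trans (norm_nonneg _) (hb 0)
  refine Integrable.mono' (g := fun s => (C * Real.exp (α.re * t)) * Real.exp (-α.re * s))
    ((exp_neg_integrableOn_Ioi t hα).const_mul _)
    (((kernel_cont α t).aestronglyMeasurable.mul hm).restrict) ?_
  refine ae_of_all _ fun s => ?_
  rw [kernel_norm]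
  calc Real.exp (α.re * (t - s)) * ‖g s‖ ≤ Real.exp (α.re * (t - s)) * C := by
        exact mul_le_mul_of_nonneg_left (hb s) (Real.exp_pos _).le
    _ = C * Real.exp (α.re * t) * Real.exp (-α.re * s) := by
        rw [mul_comm, mul_assoc, ← Real.exp_add]; ring_nf

lemma integrable_bound (hα : 0 < α.re) (hC : 0 ≤ C) (t : ℝ) :
    IntegrableOn (fun s : ℝ => C * Real.exp (α.re * (t - s))) (Set.Ioi t) := by
  have : (fun s : ℝ => C * Real.exp (α.re * (t - s)))
      = fun s => (C * Real.exp (α.re * t)) * Real.exp (-α.re * s) := by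
    funext s; rw [mul_assoc, ← Real.exp_add]; ring_nf
  rw [this]
  exact (exp_neg_integrableOn_Ioi t hα).const_mul _

noncomputable def B0 (α : ℂ) : ℝ := ∫ u in Set.Ioi (0:ℝ), Real.exp (-α.re * u)

lemma B0_nonneg (α : ℂ) : 0 ≤ B0 α :=
  setIntegral_nonneg measurableSet_Ioi fun u _ => (Real.exp_pos _).le

lemma bound_integral (hα : 0 < α.re) (C : ℝ) (t : ℝ) :
    ∫ s in Set.Ioi t, C * Real.exp (α.re * (t - s)) = C * B0 α := by
  have key := (measurePreserving_add_right volume t).setIntegral_preimage_emb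
    (measurableEmbedding_addRight t) (fun s => C * Real.exp (α.re * (t - s))) (Set.Ioi t)
  have hpre : (fun x : ℝ => x + t) ⁻¹' Set.Ioi t = Set.Ioi 0 := by
    ext x; simp
  rw [← key, hpre, B0]
  rw [← integral_const_mul]
  congr 1; funext x; congr 1; ring

lemma norm_conv_le (hα : 0 < α.re) (hm : AEStronglyMeasurable g volume)
    (hb : ∀ t, ‖g t‖ ≤ C) (t : ℝ) : ‖conv α g t‖ ≤ C * B0 α := by
  have hC : 0 ≤ C := le_trans (norm_nonneg _) (hb 0)
  rw [conv, norm_neg, ← bound_integral hα C t]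
  refine norm_integral_le_of_norm_le (integrable_bound hα hC t) (ae_of_all _ fun s => ?_)
  rw [kernel_norm]
  exact mul_le_mul_of_nonneg_left (hb s) (Real.exp_pos _).le |>.trans
    (le_of_eq (mul_comm _ _))

lemma conv_shift (t c : ℝ) :
    conv α g (t + c) = -∫ v in Set.Ioi t, Complex.exp (α * (t - v)) * g (v + c) := by
  rw [conv]
  congr 1
  have key := (measurePreserving_add_right volume c).setIntegral_preimage_emb
    (measurableEmbedding_addRight c)
    (fun u : ℝ => Complex.exp (α * ((t + c) - u)) * g u) (Set.Ioi (t + c))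
  have hpre : (fun x : ℝ => x + c) ⁻¹' Set.Ioi (t + c) = Set.Ioi t := by
    ext x; simp
  push_cast
  rw [← key, hpre]
  congr 1; funext x
  congr 2
  push_cast; ring



lemma S_open : IsOpen {t : ℝ | ∀ n : ℤ, t ≠ (n : ℝ)} := by
  have : {t : ℝ | ∀ n : ℤ, t ≠ (n : ℝ)} = (Set.range ((↑) : ℤ → ℝ))ᶜ := by
    ext x; simp [Set.mem_range, not_exists, eq_comm]
  rw [this]
  exact Int.isClosedEmbedding_coe_real.isClosed_range.isOpen_compl

lemma Z_null : (volume : Measure ℝ) (Set.range ((↑) : ℤ → ℝ)) = 0 :=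
  (Set.countable_range _).measure_zero _

lemma bddPCc_aesm {f : ℝ → ℂ} (hf : BddPCc f) : AEStronglyMeasurable f volume := by
  have h1 : AEStronglyMeasurable f (volume.restrict {t : ℝ | ∀ n : ℤ, t ≠ (n : ℝ)}) :=
    hf.2.1.aestronglyMeasurable S_open.measurableSet
  have h2 : volume.restrict {t : ℝ | ∀ n : ℤ, t ≠ (n : ℝ)} = volume := by
    apply Measure.restrict_eq_self_of_ae_mem
    have : {t : ℝ | ∀ n : ℤ, t ≠ (n : ℝ)} = (Set.range ((↑) : ℤ → ℝ))ᶜ := by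
      ext x; simp [Set.mem_range, not_exists, eq_comm]
    rw [this]
    exact compl_mem_ae_iff.mpr Z_null
  rwa [h2] at h1


noncomputable def kern (α : ℂ) (f : ℝ → ℂ) (u : ℝ) : ℂ := Complex.exp (-α * u) * f u
noncomputable def P (α : ℂ) (f : ℝ → ℂ) (t : ℝ) : ℂ := ∫ u in (0:ℝ)..t, kern α f u
noncomputable def G (α : ℂ) (f : ℝ → ℂ) (t : ℝ) : ℂ := ∫ s in Set.Ioi t, kern α f s

variable {α : ℂ} {f : ℝ → ℂ} {C : ℝ}

lemma kern_norm (α : ℂ) (u : ℝ) (z : ℂ) :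
    ‖Complex.exp (-α * u) * z‖ = Real.exp (-α.re * u) * ‖z‖ := by
  rw [norm_mul, Complex.norm_exp]
  congr 2
  simp [Complex.mul_re]

lemma kern_cont (α : ℂ) : Continuous fun u : ℝ => Complex.exp (-α * (u:ℝ)) := by fun_prop

lemma ii_of_bdd {g : ℝ → ℂ} (hm : AEStronglyMeasurable g volume) (hb : ∀ t, ‖g t‖ ≤ C)
    (a b : ℝ) : IntervalIntegrable g volume a b := by
  rw [intervalIntegrable_iff]
  refine Integrable.mono' (g := fun _ => C) ((integrableOn_const_iff).2 (Or.inr ?_))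
    hm.restrict (ae_of_all _ fun x => hb x)
  exact measure_Ioc_lt_top

lemma kern_aesm (hm : AEStronglyMeasurable f volume) :
    AEStronglyMeasurable (kern α f) volume := (kern_cont α).aestronglyMeasurable.mul hm

lemma kern_ii (hm : AEStronglyMeasurable f volume) (hb : ∀ t, ‖f t‖ ≤ C) (a b : ℝ) :
    IntervalIntegrable (kern α f) volume a b := by
  have hC : 0 ≤ C := le_trans (norm_nonneg _) (hb 0)
  rw [intervalIntegrable_iff]
  refine Integrable.mono' (g := fun u => C * Real.exp (-α.re * u))
    ((continuous_const.mul (Real.continuous_exp.comp (by fun_prop))).integrableOn_uIoc)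
    (kern_aesm hm).restrict (ae_of_all _ fun u => ?_)
  rw [kern, kern_norm]
  exact mul_le_mul_of_nonneg_left (hb u) (Real.exp_pos _).le |>.trans (le_of_eq (mul_comm _ _))

lemma integrableOn_kern (hα : 0 < α.re) (hm : AEStronglyMeasurable f volume)
    (hb : ∀ t, ‖f t‖ ≤ C) (t : ℝ) : IntegrableOn (kern α f) (Set.Ioi t) := by
  refine Integrable.mono' (g := fun u => C * Real.exp (-α.re * u))
    ((exp_neg_integrableOn_Ioi t hα).const_mul C) (kern_aesm hm).restrict
    (ae_of_all _ fun u => ?_)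
  rw [kern, kern_norm]
  exact mul_le_mul_of_nonneg_left (hb u) (Real.exp_pos _).le |>.trans (le_of_eq (mul_comm _ _))

lemma Gsplit (hα : 0 < α.re) (hm : AEStronglyMeasurable f volume) (hb : ∀ t, ‖f t‖ ≤ C)
    {a b : ℝ} (hab : a ≤ b) :
    G α f a = (∫ u in a..b, kern α f u) + G α f b := by
  rw [G, G, intervalIntegral.integral_of_le hab,
    ← setIntegral_union (Set.Ioc_disjoint_Ioi le_rfl) measurableSet_Ioi
      ((integrableOn_kern hα hm hb a).mono_set Set.Ioc_subset_Ioi_self)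
      (integrableOn_kern hα hm hb b),
    Set.Ioc_union_Ioi_eq_Ioi hab]

lemma hGP (hα : 0 < α.re) (hm : AEStronglyMeasurable f volume) (hb : ∀ t, ‖f t‖ ≤ C)
    (t : ℝ) : G α f t = G α f 0 - P α f t := by
  rcases le_total 0 t with h | h
  · rw [Gsplit hα hm hb h, P]; ring
  · rw [Gsplit hα hm hb h, P, intervalIntegral.integral_symm]; ring

lemma conv_eq (hα : 0 < α.re) (hm : AEStronglyMeasurable f volume) (hb : ∀ t, ‖f t‖ ≤ C)
    (t : ℝ) : conv α f t = -(Complex.exp (α * t) * (G α f 0 - P α f t)) := by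
  rw [← hGP hα hm hb t, G, ← integral_const_mul, conv]
  congr 1
  refine setIntegral_congr_fun measurableSet_Ioi fun s _ => ?_
  rw [kern, ← mul_assoc, ← Complex.exp_add]
  congr 2
  push_cast; ring

lemma contP (hm : AEStronglyMeasurable f volume) (hb : ∀ t, ‖f t‖ ≤ C) :
    Continuous (P α f) := intervalIntegral.continuous_primitive (kern_ii hm hb) 0

lemma contConv (hα : 0 < α.re) (hm : AEStronglyMeasurable f volume) (hb : ∀ t, ‖f t‖ ≤ C) :
    Continuous (conv α f) := by
  rw [funext (conv_eq hα hm hb)]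
  exact (((Complex.continuous_exp.comp (by fun_prop)).mul
    (continuous_const.sub (contP hm hb))).neg)

lemma hasDerivP (hm : AEStronglyMeasurable f volume) (hb : ∀ t, ‖f t‖ ≤ C)
    (hcont : ContinuousOn f {t : ℝ | ∀ n : ℤ, t ≠ (n : ℝ)})
    {u : ℝ} (hu : ∀ n : ℤ, u ≠ (n : ℝ)) : HasDerivAt (P α f) (kern α f u) u := by
  refine intervalIntegral.integral_hasDerivAt_right (kern_ii hm hb 0 u)
    ⟨Set.univ, Filter.univ_mem, by simpa using kern_aesm hm⟩ ?_
  have hfu : ContinuousAt f u := hcont.continuousAt (S_open.mem_nhds hu)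
  exact ((kern_cont α).continuousAt).mul hfu

lemma hasDerivConv (hα : 0 < α.re) (hm : AEStronglyMeasurable f volume) (hb : ∀ t, ‖f t‖ ≤ C)
    (hcont : ContinuousOn f {t : ℝ | ∀ n : ℤ, t ≠ (n : ℝ)})
    {u : ℝ} (hu : ∀ n : ℤ, u ≠ (n : ℝ)) :
    HasDerivAt (conv α f) (α * conv α f u + f u) u := by
  rw [funext (conv_eq hα hm hb)]
  have h1 : HasDerivAt (fun t : ℝ => α * (t : ℂ)) α u := by
    simpa using Complex.ofRealCLM.hasDerivAt.const_mul α
  have hE : HasDerivAt (fun t : ℝ => Complex.exp (α * (t : ℂ))) (Complex.exp (α * u) * α) u :=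
    h1.cexp
  have hD := (hE.mul ((hasDerivAt_const u (G α f 0)).sub (hasDerivP (α := α) hm hb hcont hu))).neg
  have hfu : Complex.exp (α * (u : ℂ)) * kern α f u = f u := by
    rw [kern, ← mul_assoc, ← Complex.exp_add, neg_mul, add_neg_cancel, Complex.exp_zero, one_mul]
  convert hD using 1
  · rfl
  · rfl
  beta_reduce
  simp only [Pi.sub_apply]
  linear_combination -hfu

lemma eqn (hα : 0 < α.re) (hm : AEStronglyMeasurable f volume) (hb : ∀ t, ‖f t‖ ≤ C)
    (hcont : ContinuousOn f {t : ℝ | ∀ n : ℤ, t ≠ (n : ℝ)})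
    (s t : ℝ) (hst : s ≤ t) :
    ∫ u in s..t, (α * conv α f u + f u) = conv α f t - conv α f s := by
  refine integral_eq_of_hasDerivAt_off_countable (conv α f)
    (fun u => α * conv α f u + f u) (s := Set.range ((↑) : ℤ → ℝ))
    (Set.countable_range _) (contConv hα hm hb).continuousOn (fun x hx => ?_) ?_
  · refine hasDerivConv hα hm hb hcont fun n hn => hx.2 ?_
    exact ⟨n, hn.symm⟩
  · exact ((continuous_const.mul (contConv hα hm hb)).intervalIntegrable s t).add
      (ii_of_bdd hm hb s t)

lemma lip (hα : 0 < α.re) (hm : AEStronglyMeasurable f volume) (hb : ∀ t, ‖f t‖ ≤ C)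
    (hcont : ContinuousOn f {t : ℝ | ∀ n : ℤ, t ≠ (n : ℝ)}) (a b : ℝ) :
    ‖conv α f b - conv α f a‖ ≤ (‖α‖ * (C * B0 α) + C) * |b - a| := by
  have key : ∀ a b : ℝ, a ≤ b → ‖conv α f b - conv α f a‖ ≤ (‖α‖ * (C * B0 α) + C) * |b - a| := by
    intro a b hab
    rw [← eqn hα hm hb hcont a b hab]
    refine intervalIntegral.norm_integral_le_of_norm_le_const fun x _ => ?_
    refine (norm_add_le _ _).trans ?_
    rw [norm_mul]
    exact add_le_add (mul_le_mul_of_nonneg_left (norm_conv_le hα hm hb x) (norm_nonneg α)) (hb x)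
  rcases le_total a b with h | h
  · exact key a b h
  · rw [norm_sub_rev, abs_sub_comm]; exact key b a h


lemma int_aa (hα : 0 < α.re) (hm : AEStronglyMeasurable f volume) (hb : ∀ t, ‖f t‖ ≤ C)
    (hcont : ContinuousOn f {t : ℝ | ∀ n : ℤ, t ≠ (n : ℝ)})
    (hZ : ∀ s : ℕ → ℤ, ∃ (φ : ℕ → ℕ) (g : ℝ → ℂ), StrictMono φ ∧
      (∀ t : ℝ, Tendsto (fun n => f (t + (s (φ n) : ℝ))) atTop (𝓝 (g t))) ∧
      (∀ t : ℝ, Tendsto (fun n => g (t - (s (φ n) : ℝ))) atTop (𝓝 (f t))))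
    (m : ℕ → ℤ) :
    ∃ φ : ℕ → ℕ, StrictMono φ ∧ ∃ h : ℝ → ℂ,
      (∀ t, Tendsto (fun n => conv α f (t + (m (φ n) : ℝ))) atTop (𝓝 (h t))) ∧
      (∀ t, Tendsto (fun n => h (t - (m (φ n) : ℝ))) atTop (𝓝 (conv α f t))) ∧
      (∀ a b, ‖h b - h a‖ ≤ (‖α‖ * (C * B0 α) + C) * |b - a|) := by
  have hC : 0 ≤ C := le_trans (norm_nonneg _) (hb 0)
  obtain ⟨φ, g, hφ, h1, h2⟩ := hZ m
  have hshift : ∀ c : ℝ, AEStronglyMeasurable (fun t => f (t + c)) volume := fun c => by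
    simpa [Function.comp_def] using
      hm.comp_measurePreserving (measurePreserving_add_right volume c)
  have hgm : AEStronglyMeasurable g volume :=
    aestronglyMeasurable_of_tendsto_ae atTop (fun n => hshift _) (ae_of_all _ h1)
  have hgb : ∀ t, ‖g t‖ ≤ C := fun t =>
    le_of_tendsto (h1 t).norm (Eventually.of_forall fun n => hb _)
  have hfwd : ∀ t, Tendsto (fun n => conv α f (t + (m (φ n) : ℝ))) atTop (𝓝 (conv α g t)) := by
    intro t
    have heq : ∀ n, conv α f (t + (m (φ n) : ℝ))
        = -∫ v in Set.Ioi t, Complex.exp (α * (t - v)) * f (v + (m (φ n) : ℝ)) :=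
      fun n => conv_shift _ _
    rw [funext heq, conv]
    refine Tendsto.neg ?_
    refine tendsto_integral_of_dominated_convergence
      (bound := fun v => C * Real.exp (α.re * (t - v)))
      (fun n => ((kernel_cont α t).aestronglyMeasurable.mul (hshift _)).restrict)
      (integrable_bound hα hC t) (fun n => ae_of_all _ fun v => ?_) (ae_of_all _ fun v => ?_)
    · rw [kernel_norm]
      exact (mul_le_mul_of_nonneg_left (hb _) (Real.exp_pos _).le).trans
        (le_of_eq (mul_comm _ _))
    · exact (h1 v).const_mul _
  have hbwd : ∀ t, Tendsto (fun n => conv α g (t - (m (φ n) : ℝ))) atTop (𝓝 (conv α f t)) := by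
    intro t
    have heq : ∀ n, conv α g (t - (m (φ n) : ℝ))
        = -∫ v in Set.Ioi t, Complex.exp (α * (t - v)) * g (v - (m (φ n) : ℝ)) := by
      intro n
      rw [sub_eq_add_neg, conv_shift]
      simp only [← sub_eq_add_neg]
    have hgshift : ∀ c : ℝ, AEStronglyMeasurable (fun t => g (t - c)) volume := fun c => by
      simpa [Function.comp_def, sub_eq_add_neg] using
        hgm.comp_measurePreserving (measurePreserving_add_right volume (-c))
    rw [funext heq, conv]
    refine Tendsto.neg ?_
    refine tendsto_integral_of_dominated_convergence
      (bound := fun v => C * Real.exp (α.re * (t - v)))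
      (fun n => ((kernel_cont α t).aestronglyMeasurable.mul (hgshift _)).restrict)
      (integrable_bound hα hC t) (fun n => ae_of_all _ fun v => ?_) (ae_of_all _ fun v => ?_)
    · rw [kernel_norm]
      exact (mul_le_mul_of_nonneg_left (hgb _) (Real.exp_pos _).le).trans
        (le_of_eq (mul_comm _ _))
    · exact (h2 v).const_mul _
  refine ⟨φ, hφ, conv α g, hfwd, hbwd, fun a b => ?_⟩
  have hlim : Tendsto (fun n => conv α f (b + (m (φ n) : ℝ)) - conv α f (a + (m (φ n) : ℝ)))
      atTop (𝓝 (conv α g b - conv α g a)) := (hfwd b).sub (hfwd a)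
  refine le_of_tendsto hlim.norm (Eventually.of_forall fun n => ?_)
  refine (lip hα hm hb hcont _ _).trans_eq ?_
  congr 1
  rw [show b + (m (φ n) : ℝ) - (a + (m (φ n) : ℝ)) = b - a by ring]

lemma conv_aa (hα : 0 < α.re) (hm : AEStronglyMeasurable f volume) (hb : ∀ t, ‖f t‖ ≤ C)
    (hcont : ContinuousOn f {t : ℝ | ∀ n : ℤ, t ≠ (n : ℝ)})
    (hZ : ∀ s : ℕ → ℤ, ∃ (φ : ℕ → ℕ) (g : ℝ → ℂ), StrictMono φ ∧
      (∀ t : ℝ, Tendsto (fun n => f (t + (s (φ n) : ℝ))) atTop (𝓝 (g t))) ∧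
      (∀ t : ℝ, Tendsto (fun n => g (t - (s (φ n) : ℝ))) atTop (𝓝 (f t)))) :
    AlmostAutomorphicC (conv α f) := by
  refine ⟨⟨C * B0 α, norm_conv_le hα hm hb⟩, contConv hα hm hb, fun s => ?_⟩
  obtain ⟨φ₁, hφ₁, h, hfwd, hbwd, hlip⟩ := int_aa hα hm hb hcont hZ (fun n => ⌊s n⌋)
  have hr : ∀ n, Int.fract (s (φ₁ n)) ∈ Set.Icc (0:ℝ) 1 := fun n =>
    ⟨Int.fract_nonneg _, (Int.fract_lt_one _).le⟩
  obtain ⟨r₀, hr₀, φ₂, hφ₂, hrconv⟩ := isCompact_Icc.tendsto_subseq hr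
  have hrc : Tendsto (fun n => Int.fract (s (φ₁ (φ₂ n)))) atTop (𝓝 r₀) := hrconv
  have hrc0 : Tendsto (fun n => Int.fract (s (φ₁ (φ₂ n))) - r₀) atTop (𝓝 0) := by
    simpa using hrc.sub (tendsto_const_nhds : Tendsto (fun _ : ℕ => r₀) atTop (𝓝 r₀))
  refine ⟨φ₁ ∘ φ₂, fun t => h (t + r₀), hφ₁.comp hφ₂, fun t => ?_, fun t => ?_⟩
  · have hA : Tendsto (fun n => conv α f (t + s (φ₁ (φ₂ n)))
        - conv α f ((t + r₀) + ((⌊s (φ₁ (φ₂ n))⌋ : ℤ) : ℝ))) atTop (𝓝 0) := by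
      refine squeeze_zero_norm (fun n => ?_)
        (a := fun n => (‖α‖ * (C * B0 α) + C) * |Int.fract (s (φ₁ (φ₂ n))) - r₀|) ?_
      · refine (lip hα hm hb hcont _ _).trans_eq ?_
        congr 1
        rw [Int.fract]
        ring
      · simpa using hrc0.abs.const_mul (‖α‖ * (C * B0 α) + C)
    have hB : Tendsto (fun n => conv α f ((t + r₀) + ((⌊s (φ₁ (φ₂ n))⌋ : ℤ) : ℝ)))
        atTop (𝓝 (h (t + r₀))) := (hfwd (t + r₀)).comp hφ₂.tendsto_atTop
    have := hA.add hB
    simpa using this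
  · have hA : Tendsto (fun n => h ((t - s (φ₁ (φ₂ n))) + r₀)
        - h (t - ((⌊s (φ₁ (φ₂ n))⌋ : ℤ) : ℝ))) atTop (𝓝 0) := by
      refine squeeze_zero_norm (fun n => ?_)
        (a := fun n => (‖α‖ * (C * B0 α) + C) * |r₀ - Int.fract (s (φ₁ (φ₂ n)))|) ?_
      · refine (hlip _ _).trans_eq ?_
        congr 1
        rw [Int.fract]
        ring
      · have := (hrc0.abs.const_mul (‖α‖ * (C * B0 α) + C))
        simp only [abs_sub_comm] at this ⊢
        simpa using this
    have hB : Tendsto (fun n => h (t - ((⌊s (φ₁ (φ₂ n))⌋ : ℤ) : ℝ)))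
        atTop (𝓝 (conv α f t)) := (hbwd t).comp hφ₂.tendsto_atTop
    have := hA.add hB
    simpa using this

lemma uniq (hα : 0 < α.re) (hm : AEStronglyMeasurable f volume) (hb : ∀ t, ‖f t‖ ≤ C)
    (hcont : ContinuousOn f {t : ℝ | ∀ n : ℤ, t ≠ (n : ℝ)})
    (y : ℝ → ℂ) (hy : AlmostAutomorphicC y)
    (hsol : ∀ s t : ℝ, s ≤ t → y t = y s + ∫ u in s..t, (α * y u + f u)) :
    y = conv α f := by
  obtain ⟨⟨M, hM⟩, hyc, -⟩ := hy
  have hx2c : Continuous (conv α f) := contConv hα hm hb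
  have hx2sol : ∀ s t : ℝ, s ≤ t →
      conv α f t = conv α f s + ∫ u in s..t, (α * conv α f u + f u) := fun s t hst => by
    rw [eqn hα hm hb hcont s t hst]; ring
  set z : ℝ → ℂ := fun t => y t - conv α f t with hz
  have hzc : Continuous z := hyc.sub hx2c
  have hz_eq : ∀ s t : ℝ, s ≤ t → z t = z s + ∫ u in s..t, α * z u := by
    intro s t hst
    have iy : IntervalIntegrable (fun u => α * y u + f u) volume s t :=
      ((continuous_const.mul hyc).intervalIntegrable s t).add (ii_of_bdd hm hb s t)
    have ix : IntervalIntegrable (fun u => α * conv α f u + f u) volume s t :=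
      ((continuous_const.mul hx2c).intervalIntegrable s t).add (ii_of_bdd hm hb s t)
    have step : z t = z s + ((∫ u in s..t, (α * y u + f u))
        - ∫ u in s..t, (α * conv α f u + f u)) := by
      simp only [hz]
      rw [hsol s t hst, hx2sol s t hst]; ring
    rw [step, ← intervalIntegral.integral_sub iy ix]
    congr 1
    apply intervalIntegral.integral_congr
    intro u _
    simp only [hz]
    ring
  have hz0 : ∀ t : ℝ, z t = z 0 + ∫ u in (0:ℝ)..t, α * z u := by
    intro t
    rcases le_total 0 t with h | h
    · exact hz_eq 0 t h
    · have h2 := hz_eq t 0 h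
      rw [intervalIntegral.integral_symm t 0]
      linear_combination -h2
  have hder : ∀ t : ℝ, HasDerivAt z (α * z t) t := by
    intro t
    have hprim : HasDerivAt (fun t : ℝ => ∫ u in (0:ℝ)..t, α * z u) (α * z t) t :=
      intervalIntegral.integral_hasDerivAt_right
        ((continuous_const.mul hzc).intervalIntegrable 0 t)
        ⟨Set.univ, Filter.univ_mem, by
          rw [Measure.restrict_univ]; exact (continuous_const.mul hzc).aestronglyMeasurable⟩
        (continuous_const.mul hzc).continuousAt
    have := hprim.const_add (z 0)
    exact this.congr_of_eventuallyEq (Eventually.of_forall fun x => hz0 x)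
  have hw : ∀ t : ℝ, HasDerivAt (fun t : ℝ => Complex.exp (-α * t) * z t) 0 t := by
    intro t
    have h1 : HasDerivAt (fun t : ℝ => -α * (t : ℂ)) (-α) t := by
      simpa using Complex.ofRealCLM.hasDerivAt.const_mul (-α)
    have hE : HasDerivAt (fun t : ℝ => Complex.exp (-α * (t : ℂ)))
        (Complex.exp (-α * t) * (-α)) t := h1.cexp
    have := hE.mul (hder t)
    convert this using 1
    · rfl
    · rfl
    ring
  have hwconst : ∀ t : ℝ, Complex.exp (-α * t) * z t = z 0 := by
    intro t
    have hcst := is_const_of_deriv_eq_zero (f := fun t : ℝ => Complex.exp (-α * t) * z t)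
      (fun x => (hw x).differentiableAt) (fun x => (hw x).deriv) t 0
    simpa using hcst
  have hzt : ∀ t : ℝ, z t = Complex.exp (α * t) * z 0 := by
    intro t
    calc z t = Complex.exp (α * t) * Complex.exp (-α * t) * z t := by
          rw [← Complex.exp_add, neg_mul, add_neg_cancel, Complex.exp_zero, one_mul]
      _ = Complex.exp (α * t) * (Complex.exp (-α * t) * z t) := by ring
      _ = Complex.exp (α * t) * z 0 := by rw [hwconst t]
  have hz0_zero : z 0 = 0 := by
    by_contra h0
    have hpos : 0 < ‖z 0‖ := norm_pos_iff.2 h0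
    have htend : Tendsto (fun t : ℝ => Real.exp (α.re * t) * ‖z 0‖) atTop atTop :=
      (Real.tendsto_exp_atTop.comp (tendsto_id.const_mul_atTop hα)).atTop_mul_const hpos
    obtain ⟨t, ht⟩ := (htend.eventually_gt_atTop (M + C * B0 α)).exists
    have hbd : ‖z t‖ ≤ M + C * B0 α :=
      (norm_sub_le _ _).trans (add_le_add (hM t) (norm_conv_le hα hm hb t))
    rw [hzt t, norm_mul, Complex.norm_exp,
      show (α * (t : ℂ)).re = α.re * t by simp [Complex.mul_re]] at hbd
    linarith
  funext t
  have h3 := hzt t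
  rw [hz0_zero, mul_zero] at h3
  simp only [hz] at h3
  exact sub_eq_zero.mp h3

end UAA

/-- For `Re α > 0` and `f` `ℤ`-almost automorphic, `x₂(t) = -∫_t^{+∞} e^{α(t-s)} f(s) ds`
is well defined and is the unique almost automorphic solution of `x' = α x + f`
(understood in the integrated sense). -/
theorem unique_aa_solution_re_pos (α : ℂ) (hα : 0 < α.re)
    (f : ℝ → ℂ) (hf : ZAlmostAutomorphicC f) :
    (∀ t : ℝ, IntegrableOn (fun s : ℝ => Complex.exp (α * (t - s)) * f s) (Set.Ioi t)) ∧
    AlmostAutomorphicC (fun t : ℝ => -∫ s in Set.Ioi t, Complex.exp (α * (t - s)) * f s) ∧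
    (∀ s t : ℝ, s ≤ t →
      (-∫ u in Set.Ioi t, Complex.exp (α * (t - u)) * f u) =
        (-∫ u in Set.Ioi s, Complex.exp (α * (s - u)) * f u) +
          ∫ u in s..t,
            (α * (-∫ r in Set.Ioi u, Complex.exp (α * (u - r)) * f r) + f u)) ∧
    (∀ y : ℝ → ℂ, AlmostAutomorphicC y →
      (∀ s t : ℝ, s ≤ t → y t = y s + ∫ u in s..t, (α * y u + f u)) →
      y = fun t : ℝ => -∫ s in Set.Ioi t, Complex.exp (α * (t - s)) * f s) := by
  have hm : MeasureTheory.AEStronglyMeasurable f volume := UAA.bddPCc_aesm hf.1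
  obtain ⟨⟨⟨C, hb⟩, hcont, -⟩, hZ⟩ := hf
  refine ⟨UAA.integrableOn_kernel hα hm hb, ?_, ?_, ?_⟩
  · exact UAA.conv_aa hα hm hb hcont hZ
  · intro s t hst
    have := UAA.eqn hα hm hb hcont s t hst
    show UAA.conv α f t = UAA.conv α f s + ∫ u in s..t, (α * UAA.conv α f u + f u)
    rw [this]; ring
  · intro y hy hsol
    exact UAA.uniq hα hm hb hcont y hy hsol
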